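/- Let (ȳ, ū, λ̄) be a KKT triple. Let z : [0, ∞) → ℝⁿ be differentiable and v : [0, ∞) → ℝᵐ be continuous with ż(t) = Az(t) + Bv(t) for all t ≥ 0 and z(t) → 0 as t → ∞. Then lim_{T→∞} ∫₀^T (⟨Q(ȳ − y_d), z(t)⟩ + ⟨R(ū − u_d), v(t)⟩) dt = −⟨λ̄, z(0)⟩. -/

import Mathlib

open Matrix MeasureTheory

/-- the limit of the linear cross term along a trajectory of the forward
control system converging to 0 equals `−⟨λ̄, z(0)⟩`. -/
theorem cross_term_limit
    (n m : ℕ) (hn : 1 ≤ n) (hm : 1 ≤ m)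
    (A : Matrix (Fin n) (Fin n) ℝ) (B : Matrix (Fin n) (Fin m) ℝ)
    (Q : Matrix (Fin n) (Fin n) ℝ) (hQ : Q.PosDef)
    (R : Matrix (Fin m) (Fin m) ℝ) (hR : R.PosDef)
    (yd : Fin n → ℝ) (ud : Fin m → ℝ)
    (ybar : Fin n → ℝ) (ubar : Fin m → ℝ) (lambdabar : Fin n → ℝ)
    (hfeas : A.mulVec ybar + B.mulVec ubar = 0)
    (hKKT1 : Q.mulVec (ybar - yd) = Aᵀ.mulVec lambdabar)
    (hKKT2 : R.mulVec (ubar - ud) = Bᵀ.mulVec lambdabar)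
    (z : ℝ → Fin n → ℝ) (v : ℝ → Fin m → ℝ)
    (hz : ∀ t ∈ Set.Ici (0 : ℝ),
      HasDerivWithinAt z (A.mulVec (z t) + B.mulVec (v t)) (Set.Ici 0) t)
    (hv : ContinuousOn v (Set.Ici 0))
    (hzlim : Filter.Tendsto z Filter.atTop (nhds 0)) :
    Filter.Tendsto
      (fun T : ℝ => ∫ t in (0 : ℝ)..T,
        (Q.mulVec (ybar - yd) ⬝ᵥ z t + R.mulVec (ubar - ud) ⬝ᵥ v t))
      Filter.atTop (nhds (-(lambdabar ⬝ᵥ z 0))) := by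
  -- The integrand equals λ̄ ⬝ (A z + B v) = d/dt (λ̄ ⬝ z t)
  set φ : ℝ → ℝ := fun t => lambdabar ⬝ᵥ z t with hφ
  set f : ℝ → ℝ := fun t => lambdabar ⬝ᵥ (A.mulVec (z t) + B.mulVec (v t)) with hf
  have hinteg : ∀ t : ℝ,
      Q.mulVec (ybar - yd) ⬝ᵥ z t + R.mulVec (ubar - ud) ⬝ᵥ v t = f t := by
    intro t
    simp only [hf, hKKT1, hKKT2, Matrix.mulVec_transpose, dotProduct_add,
      Matrix.dotProduct_mulVec]
  -- derivative of φ on Ici 0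
  have hzcont : ContinuousOn z (Set.Ici 0) := fun t ht =>
    (hz t ht).continuousWithinAt
  have hφderiv : ∀ t ∈ Set.Ici (0 : ℝ), HasDerivWithinAt φ (f t) (Set.Ici 0) t := by
    intro t ht
    have h := hz t ht
    have hpi := hasDerivWithinAt_pi.1 h
    have : HasDerivWithinAt (fun s => ∑ i, lambdabar i * z s i)
        (∑ i, lambdabar i * (A.mulVec (z t) + B.mulVec (v t)) i) (Set.Ici 0) t :=
      HasDerivWithinAt.fun_sum fun i _ => (hpi i).const_mul _
    simpa [hφ, hf, dotProduct] using this
  -- continuity helpers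
  have hdot : ∀ (k : ℕ) (c : Fin k → ℝ), Continuous fun w : Fin k → ℝ => c ⬝ᵥ w := by
    intro k c
    unfold dotProduct
    exact continuous_finset_sum _ fun i _ => continuous_const.mul (continuous_apply i)
  have hfcont : ContinuousOn f (Set.Ici 0) :=
    (hdot n lambdabar).comp_continuousOn
      (((continuous_pi fun i => hdot n (A i)).comp_continuousOn hzcont).add
        ((continuous_pi fun i => hdot m (B i)).comp_continuousOn hv))
  have key : ∀ T : ℝ, 0 ≤ T →
      (∫ t in (0:ℝ)..T,
        (Q.mulVec (ybar - yd) ⬝ᵥ z t + R.mulVec (ubar - ud) ⬝ᵥ v t)) = φ T - φ 0 := by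
    intro T hT
    have : (∫ t in (0:ℝ)..T,
        (Q.mulVec (ybar - yd) ⬝ᵥ z t + R.mulVec (ubar - ud) ⬝ᵥ v t)) = ∫ t in (0:ℝ)..T, f t := by
      simp only [hinteg]
    rw [this]
    apply intervalIntegral.integral_eq_sub_of_hasDeriv_right_of_le hT
    · exact ((hdot n lambdabar).comp_continuousOn hzcont).mono Set.Icc_subset_Ici_self
    · intro t ht
      exact ((hφderiv t (le_of_lt ht.1)).mono (Set.Ioi_subset_Ici_self)).mono_of_mem_nhdsWithin
        (mem_nhdsWithin_of_mem_nhds (Ioi_mem_nhds ht.1)) |>.mono (Set.Ioi_subset_Ici_self)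
    · exact (hfcont.mono (Set.uIcc_of_le hT ▸ Set.Icc_subset_Ici_self)).intervalIntegrable
  have h1 : Filter.Tendsto (fun T => φ T - φ 0) Filter.atTop (nhds (-(lambdabar ⬝ᵥ z 0))) := by
    have : Filter.Tendsto φ Filter.atTop (nhds (lambdabar ⬝ᵥ (0 : Fin n → ℝ))) := by
      exact ((hdot n lambdabar).tendsto 0).comp hzlim
    simpa using this.sub_const (φ 0)
  apply h1.congr'
  filter_upwards [Filter.eventually_ge_atTop (0:ℝ)] with T hT
  exact (key T hT).symm
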